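/- Let V be a finite-dimensional complex normed space, let T : V → V be linear, and let Q : V → V be an idempotent linear map (Q ∘ Q = Q) commuting with T such that every eigenvalue of the restriction of T to range(id − Q) has modulus strictly less than 1. Then there exist constants c > 0 and r with 0 < r < 1 such that ‖T^n − T^n ∘ Q‖ ≤ c r^n for all n ≥ 1. -/

import Mathlib

/-- Let `V` be a finite-dimensional complex normed space,
`T : V → V` linear, and `Q : V → V` an idempotent linear map commuting with `T` such
that every eigenvalue of the restriction of `T` to `range(id − Q)` (equivalently,
every `λ` admitting an eigenvector of `T` lying in `range(id − Q)`) has modulus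
strictly less than one.  Then there are constants `c > 0` and `0 < r < 1` with
`‖T^n − T^n ∘ Q‖ ≤ c rⁿ` for all `n ≥ 1`. -/
theorem stmt14 {V : Type*} [NormedAddCommGroup V] [NormedSpace ℂ V]
    [FiniteDimensional ℂ V]
    (T Q : V →L[ℂ] V)
    (hidem : Q.comp Q = Q)
    (hcomm : T.comp Q = Q.comp T)
    (heig : ∀ lam : ℂ,
      (∃ x ∈ LinearMap.range (((1 : V →L[ℂ] V) - Q : V →L[ℂ] V) : V →ₗ[ℂ] V), x ≠ 0 ∧ T x = lam • x) →
      ‖lam‖ < 1) :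
    ∃ c r : ℝ, 0 < c ∧ 0 < r ∧ r < 1 ∧
      ∀ n : ℕ, 1 ≤ n → ‖T ^ n - (T ^ n).comp Q‖ ≤ c * r ^ n := by
  classical
  -- the operator `S = T ∘ (1 - Q)`
  set P : V →L[ℂ] V := 1 - Q with hP
  set S : V →L[ℂ] V := T * P with hS
  have hcomm' : T * Q = Q * T := hcomm
  have hcommP : P * T = T * P := by
    simp only [hP, sub_mul, mul_sub, one_mul, mul_one, hcomm']
  have hPidem : P * P = P := by
    have : IsIdempotentElem Q := hidem
    exact this.one_sub
  -- key identity : `T ^ n - T ^ n ∘ Q = S ^ n` for `n ≥ 1`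
  have key : ∀ n : ℕ, 1 ≤ n → T ^ n - (T ^ n).comp Q = S ^ n := by
    intro n hn
    have hSn : ∀ m : ℕ, S ^ (m + 1) = T ^ (m + 1) * P := by
      intro m
      induction m with
      | zero => simp [hS]
      | succ k ih =>
        calc S ^ (k + 1 + 1) = S ^ (k + 1) * S := pow_succ S (k + 1)
          _ = T ^ (k + 1) * P * (T * P) := by rw [ih, hS]
          _ = T ^ (k + 1) * (P * T) * P := by
              simp only [mul_assoc]
          _ = T ^ (k + 1) * (T * P) * P := by rw [hcommP]
          _ = T ^ (k + 1 + 1) * (P * P) := by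
              rw [pow_succ, pow_succ, pow_succ]
              simp only [mul_assoc]
          _ = T ^ (k + 1 + 1) * P := by rw [hPidem]
    obtain ⟨m, rfl⟩ := Nat.exists_eq_add_of_le hn
    rw [Nat.add_comm 1 m, hSn m]
    show T ^ (m + 1) - T ^ (m + 1) * Q = _
    rw [hP, mul_sub, mul_one]
  -- every element of the spectrum of `S` has modulus `< 1`
  have hspec : ∀ z ∈ spectrum ℂ S, ‖z‖ < 1 := by
    intro z hz
    -- first extract an eigenvector
    have : ∃ x : V, x ≠ 0 ∧ S x = z • x := by
      by_contra hcon
      push_neg at hcon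
      have hinj : Function.Injective (algebraMap ℂ (V →L[ℂ] V) z - S) := by
        rw [injective_iff_map_eq_zero]
        intro x hx
        by_contra hx0
        have hx' : z • x - S x = 0 := by
          simpa [ContinuousLinearMap.sub_apply, Algebra.algebraMap_eq_smul_one] using hx
        exact hcon x hx0 (sub_eq_zero.mp hx').symm
      exact (spectrum.mem_iff.mp hz) (ContinuousLinearMap.isUnit_iff_bijective.mpr
        ⟨hinj, LinearMap.injective_iff_surjective.mp hinj⟩)
    obtain ⟨x, hx0, hxe⟩ := this
    by_cases hz0 : z = 0
    · simpa [hz0] using (one_pos : (0:ℝ) < 1)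
    · -- `x` lies in the range of `P = 1 - Q` and is an eigenvector of `T`
      have hPx : P x = x := by
        have h1 : P (S x) = S x := by
          have : P * S = S := by
            rw [hS, ← mul_assoc, hcommP, mul_assoc, hPidem]
          calc P (S x) = (P * S) x := rfl
            _ = S x := by rw [this]
        rw [hxe] at h1
        have h2 : z • P x = z • x := by
          simpa using h1
        exact smul_right_injective V hz0 h2
      have hTx : T x = z • x := by
        have : T (P x) = S x := rfl
        rw [hPx, hxe] at this
        exact this
      exact heig z ⟨x, ⟨x, hPx⟩, hx0, hTx⟩
  -- handle the trivial case
  rcases subsingleton_or_nontrivial V with hV | hV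
  · refine ⟨1, 1/2, one_pos, by norm_num, by norm_num, fun n hn => ?_⟩
    have : (T ^ n - (T ^ n).comp Q) = 0 := Subsingleton.elim _ _
    rw [this, norm_zero]
    positivity
  -- the spectral radius of `S` is `< 1`
  obtain ⟨z, hzmem, hzrad⟩ := spectrum.exists_nnnorm_eq_spectralRadius (a := S)
  have hz1 : ‖z‖ < 1 := hspec z hzmem
  set r : NNReal := ⟨(‖z‖ + 1) / 2, by positivity⟩ with hr
  have hrcoe : (r : ℝ) = (‖z‖ + 1) / 2 := rfl
  have hrpos : (0:ℝ) < r := by rw [hrcoe]; positivity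
  have hr1 : (r:ℝ) < 1 := by rw [hrcoe]; linarith
  have hzr : ‖z‖₊ < r := by
    rw [← NNReal.coe_lt_coe, coe_nnnorm, hrcoe]
    linarith
  have hradlt : spectralRadius ℂ S < (r : ENNReal) := by
    rw [← hzrad]
    exact_mod_cast hzr
  -- Gelfand's formula gives eventual geometric decay
  have hglf := spectrum.pow_nnnorm_pow_one_div_tendsto_nhds_spectralRadius S
  have hev : ∀ᶠ n : ℕ in Filter.atTop,
      ((‖S ^ n‖₊ : ENNReal) ^ (1 / (n:ℝ))) < (r : ENNReal) :=
    hglf.eventually_lt_const hradlt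
  obtain ⟨N, hN⟩ := Filter.eventually_atTop.mp hev
  have hbound : ∀ n : ℕ, max N 1 ≤ n → ‖S ^ n‖ ≤ (r:ℝ) ^ n := by
    intro n hn
    have hn1 : 1 ≤ n := le_trans (le_max_right N 1) hn
    have h := hN n (le_trans (le_max_left N 1) hn)
    have hnpos : (0:ℝ) < (n:ℝ) := by exact_mod_cast hn1
    have h2 : ((‖S ^ n‖₊ : ENNReal) ^ (1 / (n:ℝ))) ^ (n:ℝ) < ((r : ENNReal)) ^ (n:ℝ) :=
      ENNReal.rpow_lt_rpow h hnpos
    rw [← ENNReal.rpow_mul, one_div, inv_mul_cancel₀ hnpos.ne', ENNReal.rpow_one,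
      ENNReal.rpow_natCast, ← ENNReal.coe_pow] at h2
    have h3 : ‖S ^ n‖₊ < r ^ n := by exact_mod_cast h2
    have h4 := h3.le
    rw [← NNReal.coe_le_coe, coe_nnnorm, NNReal.coe_pow] at h4
    exact h4
  -- assemble the constant
  set M := max N 1 with hM
  obtain ⟨s, hs0, hsle⟩ : ∃ s : ℝ, 0 ≤ s ∧
      ∀ n ∈ Finset.range (M + 1), ‖S ^ n‖ / (r:ℝ) ^ n ≤ s := by
    refine ⟨∑ i ∈ Finset.range (M + 1), ‖S ^ i‖ / (r:ℝ) ^ i,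
      Finset.sum_nonneg fun i _ => by positivity, fun n hn => ?_⟩
    exact Finset.single_le_sum (f := fun i => ‖S ^ i‖ / (r:ℝ) ^ i)
      (fun i _ => by positivity) hn
  refine ⟨1 + s, r, by linarith, hrpos, hr1, fun n hn => ?_⟩
  rw [key n hn]
  rcases le_or_gt M n with h | h
  · calc ‖S ^ n‖ ≤ (r:ℝ) ^ n := hbound n h
      _ = 1 * (r:ℝ) ^ n := (one_mul _).symm
      _ ≤ (1 + s) * (r:ℝ) ^ n := by
        apply mul_le_mul_of_nonneg_right (by linarith) (by positivity)
  · have hmem : n ∈ Finset.range (M + 1) := Finset.mem_range.mpr (by omega)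
    have h1 : ‖S ^ n‖ / (r:ℝ) ^ n ≤ 1 + s := le_trans (hsle n hmem) (by linarith)
    calc ‖S ^ n‖ = (‖S ^ n‖ / (r:ℝ) ^ n) * (r:ℝ) ^ n := by
          field_simp
      _ ≤ (1 + s) * (r:ℝ) ^ n := mul_le_mul_of_nonneg_right h1 (by positivity)
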